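/- Let Q be a substochastic real matrix over a finite index set, and suppose there exist a natural number m ≥ 1 and a real p ∈ (0,1] such that ‖Q^m‖ ≤ 1 − p. Then I − Q is invertible and ‖(I − Q)⁻¹‖ ≤ m/p. -/

import Mathlib

attribute [local instance] Matrix.linftyOpNormedRing

/-- Bernoulli-trials bound on the fundamental matrix: if `Q` is substochastic and
`‖Q^m‖ ≤ 1 - p` for some `m ≥ 1` and `p ∈ (0,1]`, then `I - Q` is invertible and
`‖(I - Q)⁻¹‖ ≤ m / p` (norms are maximum absolute row sums). -/
theorem fundamental_matrix_norm_bound {S : Type*} [Fintype S] [DecidableEq S]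
    (Q : Matrix S S ℝ)
    (hQ0 : ∀ i j, 0 ≤ Q i j) (hQ1 : ∀ i, ∑ j, Q i j ≤ 1)
    (m : ℕ) (hm : 1 ≤ m) (p : ℝ) (hp : p ∈ Set.Ioc (0 : ℝ) 1)
    (hnorm : ‖Q ^ m‖ ≤ 1 - p) :
    IsUnit (1 - Q) ∧ ‖(1 - Q)⁻¹‖ ≤ (m : ℝ) / p := by
  obtain ⟨hp0, hp1⟩ := hp
  -- ‖Q‖ ≤ 1
  have hQle : ‖Q‖ ≤ 1 := by
    rw [Matrix.linfty_opNorm_def, NNReal.coe_le_one]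
    apply Finset.sup_le
    intro i _
    rw [← NNReal.coe_le_coe, NNReal.coe_sum, NNReal.coe_one]
    calc ∑ j, (‖Q i j‖₊ : ℝ) = ∑ j, Q i j := by
          refine Finset.sum_congr rfl fun j _ => ?_
          simp [Real.norm_eq_abs, abs_of_nonneg (hQ0 i j)]
      _ ≤ 1 := hQ1 i
  have hxlt : ‖Q ^ m‖ < 1 := lt_of_le_of_lt hnorm (by linarith)
  -- unit for 1 - Q^m
  haveI : HasSummableGeomSeries (Matrix S S ℝ) :=
    @instHasSummableGeomSeriesOfCompleteSpace _ Matrix.linftyOpNormedRing (by exact (inferInstance : CompleteSpace (S → S → ℝ)))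
  set u : (Matrix S S ℝ)ˣ := Units.oneSub (Q ^ m) hxlt with hu
  set v : Matrix S S ℝ := (↑u⁻¹ : Matrix S S ℝ) with hv
  have h2 : (↑u : Matrix S S ℝ) = 1 - Q ^ m := rfl
  have huv : (↑u : Matrix S S ℝ) * v = 1 := u.mul_inv
  have hvu : v * (↑u : Matrix S S ℝ) = 1 := u.inv_mul
  -- bound ‖v‖ ≤ 1/p
  have hinv_rel : v = 1 + Q ^ m * v := by
    rw [h2, sub_mul, one_mul, sub_eq_iff_eq_add] at huv
    linear_combination (norm := module) huv
  have hone : ‖(1 : Matrix S S ℝ)‖ ≤ 1 := by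
    rcases isEmpty_or_nonempty S with hS | hS
    · simp [Subsingleton.elim (1 : Matrix S S ℝ) 0]
    · exact le_of_eq norm_one
  have hinv_norm : ‖v‖ ≤ 1 / p := by
    have hb : ‖v‖ ≤ ‖(1 : Matrix S S ℝ)‖ + ‖Q ^ m‖ * ‖v‖ := by
      calc ‖v‖ = ‖(1 : Matrix S S ℝ) + Q ^ m * v‖ := by rw [← hinv_rel]
        _ ≤ ‖(1 : Matrix S S ℝ)‖ + ‖Q ^ m * v‖ := norm_add_le _ _
        _ ≤ ‖(1 : Matrix S S ℝ)‖ + ‖Q ^ m‖ * ‖v‖ := by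
            gcongr; exact norm_mul_le _ _
    have hnn : 0 ≤ ‖v‖ := norm_nonneg _
    rw [le_div_iff₀ hp0]
    nlinarith [mul_le_mul_of_nonneg_right hnorm hnn]
  -- geometric sum
  set G : Matrix S S ℝ := ∑ i ∈ Finset.range m, Q ^ i with hG
  have hGnorm : ‖G‖ ≤ (m : ℝ) := by
    calc ‖G‖ ≤ ∑ i ∈ Finset.range m, ‖Q ^ i‖ := norm_sum_le _ _
      _ ≤ ∑ i ∈ Finset.range m, 1 := by
          refine Finset.sum_le_sum fun i _ => ?_
          rcases Nat.eq_zero_or_pos i with hi | hi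
          · subst hi
            rw [pow_zero]
            exact hone
          · calc ‖Q ^ i‖ ≤ ‖Q‖ ^ i := norm_pow_le' Q hi
              _ ≤ 1 := pow_le_one₀ (norm_nonneg Q) hQle
      _ = (m : ℝ) := by simp
  -- geometric identities
  have hGr : (1 - Q) * G = ↑u := by
    have h := mul_geom_sum Q m
    rw [h2]
    linear_combination (norm := noncomm_ring) -h
  have hGl : G * (1 - Q) = ↑u := by
    have h := geom_sum_mul Q m
    rw [h2]
    linear_combination (norm := noncomm_ring) -h
  set B : Matrix S S ℝ := G * v with hB
  have hright : (1 - Q) * B = 1 := by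
    rw [hB, ← mul_assoc, hGr, huv]
  have hcu : Commute (1 - Q) (↑u : Matrix S S ℝ) := by
    show (1 - Q) * (↑u : Matrix S S ℝ) = (↑u : Matrix S S ℝ) * (1 - Q)
    have hc : Q * Q ^ m = Q ^ m * Q := ((Commute.refl Q).pow_right m).eq
    rw [h2]
    linear_combination (norm := noncomm_ring) hc
  have hcomm : (1 - Q) * v = v * (1 - Q) := hcu.units_inv_right.eq
  have hleft : B * (1 - Q) = 1 := by
    rw [hB, mul_assoc, ← hcomm, ← mul_assoc, hGl, huv]
  have hunit : IsUnit (1 - Q) := ⟨⟨1 - Q, B, hright, hleft⟩, rfl⟩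
  refine ⟨hunit, ?_⟩
  have hinv_eq : (1 - Q)⁻¹ = B := Matrix.inv_eq_right_inv hright
  rw [hinv_eq]
  calc ‖B‖ ≤ ‖G‖ * ‖v‖ := norm_mul_le _ _
    _ ≤ (m : ℝ) * (1 / p) := by
        apply mul_le_mul hGnorm hinv_norm (norm_nonneg _)
        exact_mod_cast Nat.zero_le m
    _ = (m : ℝ) / p := by ring
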